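/- Every strongly connected semistable pointed directed multigraph is stabilizable, and a stabilizable semistable pointed graph whose stabilization graph is strongly connected is itself strongly connected. -/

import Mathlib

open Relation

/-- A pointed finite directed multigraph: a digraph with a distinguished vertex. -/
structure PGraph where
  V : Type
  E : Type
  [hV : Finite V]
  [hE : Finite E]
  src : E → V
  tgt : E → V
  base : V

attribute [instance] PGraph.hV PGraph.hE

namespace PGraph

noncomputable def degOut (G : PGraph) (v : G.V) : ℕ := Nat.card {e : G.E // G.src e = v}
noncomputable def degIn (G : PGraph) (v : G.V) : ℕ := Nat.card {e : G.E // G.tgt e = v}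

/-- Semistability, required only of ordinary (non-distinguished) vertices. -/
def Semistable (G : PGraph) : Prop :=
  ∀ v : G.V, v ≠ G.base → 1 ≤ G.degIn v ∧ 1 ≤ G.degOut v ∧ 3 ≤ G.degIn v + G.degOut v

/-- Stability, required only of ordinary vertices. -/
def Stable (G : PGraph) : Prop :=
  ∀ v : G.V, v ≠ G.base → 2 ≤ G.degIn v ∧ 2 ≤ G.degOut v

/-- An edge `uv` is contractible if `u ≠ v` and either `u` is ordinary with out-degree 1,
or `v` is ordinary with in-degree 1. -/
def Contractible (G : PGraph) (e : G.E) : Prop :=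
  G.src e ≠ G.tgt e ∧
    ((G.src e ≠ G.base ∧ G.degOut (G.src e) = 1) ∨
     (G.tgt e ≠ G.base ∧ G.degIn (G.tgt e) = 1))

def mergeRel (G : PGraph) (e0 : G.E) (a b : G.V) : Prop :=
  a = b ∨ ((a = G.src e0 ∨ a = G.tgt e0) ∧ (b = G.src e0 ∨ b = G.tgt e0))

/-- Contract the edge `e0`, merging its two endpoints. -/
def contract (G : PGraph) (e0 : G.E) : PGraph where
  V := Quot (G.mergeRel e0)
  E := {e : G.E // e ≠ e0}
  src e := Quot.mk _ (G.src e.1)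
  tgt e := Quot.mk _ (G.tgt e.1)
  base := Quot.mk _ G.base

/-- Isomorphism of pointed graphs. -/
structure Iso (G H : PGraph) where
  vEquiv : G.V ≃ H.V
  eEquiv : G.E ≃ H.E
  src_map : ∀ e, H.src (eEquiv e) = vEquiv (G.src e)
  tgt_map : ∀ e, H.tgt (eEquiv e) = vEquiv (G.tgt e)
  base_map : vEquiv G.base = H.base

def Adj (G : PGraph) (a b : G.V) : Prop := ∃ e, G.src e = a ∧ G.tgt e = b

def Strong (G : PGraph) : Prop := ∀ a b : G.V, ReflTransGen G.Adj a b

def ContractStep (G H : PGraph) : Prop :=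
  ∃ e0 : G.E, G.Contractible e0 ∧ Nonempty (Iso (G.contract e0) H)

def IsStabilization (G H : PGraph) : Prop :=
  ReflTransGen ContractStep G H ∧ H.Stable

def Stabilizable (G : PGraph) : Prop := ∃ H, G.IsStabilization H

open Classical in
/-- The determinant det(I − A(Γ₋)), where Γ₋ is the graph on the ordinary vertices. -/
noncomputable def detIAminus (G : PGraph) : ℤ :=
  letI := Fintype.ofFinite {v : G.V // v ≠ G.base}
  ((1 : Matrix {v : G.V // v ≠ G.base} {v : G.V // v ≠ G.base} ℤ) -
    Matrix.of fun a b : {v : G.V // v ≠ G.base} =>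
      (Nat.card {e : G.E // G.src e = a.1 ∧ G.tgt e = b.1} : ℤ)).det

end PGraph
namespace PGraph

section Aux

lemma card_erase {α : Type*} [Finite α] (P : α → Prop) (a : α) (ha : P a) :
    Nat.card {x // x ≠ a ∧ P x} + 1 = Nat.card {x // P x} := by
  classical
  cases nonempty_fintype α
  rw [Nat.card_eq_fintype_card, Nat.card_eq_fintype_card, Fintype.card_subtype,
    Fintype.card_subtype]
  have h2 : (Finset.univ.filter fun x => x ≠ a ∧ P x) = (Finset.univ.filter P).erase a := by
    ext x
    simp [Finset.mem_erase, and_comm]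
  rw [h2]
  exact Finset.card_erase_add_one (by simp [ha])

lemma card_or {α : Type*} [Finite α] (P Q : α → Prop) (h : ∀ x, ¬(P x ∧ Q x)) :
    Nat.card {x // P x ∨ Q x} = Nat.card {x // P x} + Nat.card {x // Q x} := by
  classical
  cases nonempty_fintype α
  simp only [Nat.card_eq_fintype_card, Fintype.card_subtype]
  rw [← Finset.card_union_of_disjoint]
  · congr 1; ext x; simp [Finset.mem_union]
  · rw [Finset.disjoint_left]
    intro x hx hx'
    simp only [Finset.mem_filter] at hx hx'
    exact h x ⟨hx.2, hx'.2⟩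

variable (G : PGraph) (e0 : G.E)

lemma mergeRel_equivalence : Equivalence (G.mergeRel e0) := by
  constructor
  · intro a; exact Or.inl rfl
  · rintro a b (rfl | ⟨h1, h2⟩)
    · exact Or.inl rfl
    · exact Or.inr ⟨h2, h1⟩
  · rintro a b c (rfl | ⟨h1, h2⟩) (rfl | ⟨h3, h4⟩)
    · exact Or.inl rfl
    · exact Or.inr ⟨h3, h4⟩
    · exact Or.inr ⟨h1, h2⟩
    · exact Or.inr ⟨h1, h4⟩

lemma quot_eq_iff {a b : G.V} :
    Quot.mk (G.mergeRel e0) a = Quot.mk (G.mergeRel e0) b ↔ G.mergeRel e0 a b := by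
  rw [Quot.eq, (G.mergeRel_equivalence e0).eqvGen_iff]

lemma eq_of_degOut_one {x : G.V} (h : G.degOut x = 1) {e e' : G.E}
    (he : G.src e = x) (he' : G.src e' = x) : e = e' := by
  obtain ⟨a, ha⟩ := Nat.card_eq_one_iff_exists.mp h
  have h1 := ha ⟨e, he⟩
  have h2 := ha ⟨e', he'⟩
  rw [← h2] at h1
  exact Subtype.ext_iff.mp h1

lemma eq_of_degIn_one {x : G.V} (h : G.degIn x = 1) {e e' : G.E}
    (he : G.tgt e = x) (he' : G.tgt e' = x) : e = e' := by
  obtain ⟨a, ha⟩ := Nat.card_eq_one_iff_exists.mp h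
  have h1 := ha ⟨e, he⟩
  have h2 := ha ⟨e', he'⟩
  rw [← h2] at h1
  exact Subtype.ext_iff.mp h1

lemma exists_src (x : G.V) (h : 1 ≤ G.degOut x) : ∃ e, G.src e = x := by
  have : 0 < Nat.card {e : G.E // G.src e = x} := h
  obtain ⟨⟨e, he⟩⟩ := (Nat.card_pos_iff.mp this).1
  exact ⟨e, he⟩

lemma exists_tgt (x : G.V) (h : 1 ≤ G.degIn x) : ∃ e, G.tgt e = x := by
  have : 0 < Nat.card {e : G.E // G.tgt e = x} := h
  obtain ⟨⟨e, he⟩⟩ := (Nat.card_pos_iff.mp this).1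
  exact ⟨e, he⟩

lemma degOut_contract_ne (x : G.V) (hx1 : x ≠ G.src e0) (hx2 : x ≠ G.tgt e0) :
    (G.contract e0).degOut (Quot.mk _ x) = G.degOut x := by
  apply Nat.card_congr
  refine ((Equiv.subtypeSubtypeEquivSubtypeInter (fun e => e ≠ e0)
    (fun e => Quot.mk (G.mergeRel e0) (G.src e) = Quot.mk _ x)).trans
    (Equiv.subtypeEquivRight fun e => ?_))
  rw [G.quot_eq_iff e0]
  constructor
  · rintro ⟨_, (h | ⟨h1, h2⟩)⟩
    · exact h
    · rcases h2 with rfl | rfl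
      · exact absurd rfl hx1
      · exact absurd rfl hx2
  · intro h
    refine ⟨fun he => hx1 ?_, Or.inl h⟩
    rw [← h, he]

lemma degIn_contract_ne (x : G.V) (hx1 : x ≠ G.src e0) (hx2 : x ≠ G.tgt e0) :
    (G.contract e0).degIn (Quot.mk _ x) = G.degIn x := by
  apply Nat.card_congr
  refine ((Equiv.subtypeSubtypeEquivSubtypeInter (fun e => e ≠ e0)
    (fun e => Quot.mk (G.mergeRel e0) (G.tgt e) = Quot.mk _ x)).trans
    (Equiv.subtypeEquivRight fun e => ?_))
  rw [G.quot_eq_iff e0]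
  constructor
  · rintro ⟨_, (h | ⟨h1, h2⟩)⟩
    · exact h
    · rcases h2 with rfl | rfl
      · exact absurd rfl hx1
      · exact absurd rfl hx2
  · intro h
    refine ⟨fun he => hx2 ?_, Or.inl h⟩
    rw [← h, he]

lemma degOut_contract_merge (hne : G.src e0 ≠ G.tgt e0) :
    (G.contract e0).degOut (Quot.mk _ (G.src e0)) + 1
      = G.degOut (G.src e0) + G.degOut (G.tgt e0) := by
  have h1 : (G.contract e0).degOut (Quot.mk _ (G.src e0))
      = Nat.card {e : G.E // e ≠ e0 ∧ (G.src e = G.src e0 ∨ G.src e = G.tgt e0)} := by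
    apply Nat.card_congr
    refine ((Equiv.subtypeSubtypeEquivSubtypeInter (fun e => e ≠ e0)
      (fun e => Quot.mk (G.mergeRel e0) (G.src e) = Quot.mk _ (G.src e0))).trans
      (Equiv.subtypeEquivRight fun e => ?_))
    rw [G.quot_eq_iff e0]
    constructor
    · rintro ⟨h, (h' | ⟨h1, h2⟩)⟩
      · exact ⟨h, Or.inl h'⟩
      · exact ⟨h, h1⟩
    · rintro ⟨h, h'⟩
      exact ⟨h, Or.inr ⟨h', Or.inl rfl⟩⟩
  rw [h1, card_erase _ e0 (Or.inl rfl),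
    card_or _ _ (fun e ⟨h1, h2⟩ => hne (h1 ▸ h2 ▸ rfl))]
  rfl

lemma degIn_contract_merge (hne : G.src e0 ≠ G.tgt e0) :
    (G.contract e0).degIn (Quot.mk _ (G.src e0)) + 1
      = G.degIn (G.src e0) + G.degIn (G.tgt e0) := by
  have h1 : (G.contract e0).degIn (Quot.mk _ (G.src e0))
      = Nat.card {e : G.E // e ≠ e0 ∧ (G.tgt e = G.src e0 ∨ G.tgt e = G.tgt e0)} := by
    apply Nat.card_congr
    refine ((Equiv.subtypeSubtypeEquivSubtypeInter (fun e => e ≠ e0)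
      (fun e => Quot.mk (G.mergeRel e0) (G.tgt e) = Quot.mk _ (G.src e0))).trans
      (Equiv.subtypeEquivRight fun e => ?_))
    rw [G.quot_eq_iff e0]
    constructor
    · rintro ⟨h, (h' | ⟨h1, h2⟩)⟩
      · exact ⟨h, Or.inl h'⟩
      · exact ⟨h, h1⟩
    · rintro ⟨h, h'⟩
      exact ⟨h, Or.inr ⟨h', Or.inl rfl⟩⟩
  rw [h1, card_erase _ e0 (Or.inr rfl),
    card_or _ _ (fun e ⟨h1, h2⟩ => hne (h1 ▸ h2 ▸ rfl))]
  rfl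

end Aux

end PGraph
namespace PGraph

section Aux2

variable (G : PGraph) (e0 : G.E)

lemma contract_semistable (hs : G.Semistable) (hc : G.Contractible e0) :
    (G.contract e0).Semistable := by
  obtain ⟨hne, hor⟩ := hc
  intro q hq
  obtain ⟨x, rfl⟩ := Quot.exists_rep q
  have hq' : ¬ G.mergeRel e0 x G.base := fun h => hq ((G.quot_eq_iff e0).mpr h)
  by_cases hxS : x = G.src e0 ∨ x = G.tgt e0
  · -- x in merged class
    have hbase : ¬ (G.base = G.src e0 ∨ G.base = G.tgt e0) := by
      intro hB
      exact hq' (Or.inr ⟨hxS, by tauto⟩)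
    push_neg at hbase
    have hub : G.src e0 ≠ G.base := fun h => hbase.1 h.symm
    have hvb : G.tgt e0 ≠ G.base := fun h => hbase.2 h.symm
    have hqu : Quot.mk (G.mergeRel e0) x = Quot.mk _ (G.src e0) :=
      (G.quot_eq_iff e0).mpr (Or.inr ⟨hxS, Or.inl rfl⟩)
    rw [hqu]
    have hO := G.degOut_contract_merge e0 hne
    have hI := G.degIn_contract_merge e0 hne
    have hu := hs _ hub
    have hv := hs _ hvb
    rcases hor with ⟨_, h1⟩ | ⟨_, h1⟩ <;> omega
  · push_neg at hxS
    rw [G.degOut_contract_ne e0 x hxS.1 hxS.2, G.degIn_contract_ne e0 x hxS.1 hxS.2]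
    exact hs x (fun h => hq' (Or.inl h))

lemma card_contract_lt (hne : G.src e0 ≠ G.tgt e0) :
    Nat.card (G.contract e0).V < Nat.card G.V := by
  classical
  cases nonempty_fintype G.V
  cases nonempty_fintype (G.contract e0).V
  rw [Nat.card_eq_fintype_card, Nat.card_eq_fintype_card]
  refine Fintype.card_lt_of_surjective_not_injective (Quot.mk (G.mergeRel e0))
    (fun q => Quot.exists_rep q) (fun hinj => ?_)
  exact hne (hinj (Quot.sound (Or.inr ⟨Or.inl rfl, Or.inr rfl⟩)))

lemma contract_strong (h : G.Strong) : (G.contract e0).Strong := by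
  intro a b
  obtain ⟨x, rfl⟩ := Quot.exists_rep a
  obtain ⟨y, rfl⟩ := Quot.exists_rep b
  have hh := h x y
  clear h
  induction hh with
  | refl => exact .refl
  | @tail c b h1 h2 ih =>
    obtain ⟨e, he1, he2⟩ := h2
    by_cases he : e = e0
    · have : Quot.mk (G.mergeRel e0) c = Quot.mk (G.mergeRel e0) b :=
        (G.quot_eq_iff e0).mpr
          (Or.inr ⟨Or.inl (by rw [← he1, he]), Or.inr (by rw [← he2, he])⟩)
      rwa [← this]
    · exact ih.tail ⟨⟨e, he⟩, by rw [show (G.contract e0).src ⟨e, he⟩ = Quot.mk _ (G.src e) from rfl, he1],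
        by rw [show (G.contract e0).tgt ⟨e, he⟩ = Quot.mk _ (G.tgt e) from rfl, he2]⟩

lemma lift_forward (hne : G.src e0 ≠ G.tgt e0) (hdeg : G.degOut (G.src e0) = 1)
    {q q' : (G.contract e0).V} (h : ReflTransGen (G.contract e0).Adj q q') :
    ∀ x : G.V, Quot.mk (G.mergeRel e0) x = q →
      ∃ y, Quot.mk (G.mergeRel e0) y = q' ∧ ReflTransGen G.Adj x y := by
  induction h with
  | refl => exact fun x hx => ⟨x, hx, .refl⟩
  | @tail m q' h1 h2 ih =>
    intro x hx
    obtain ⟨y, hy, hxy⟩ := ih x hx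
    obtain ⟨e, he1, he2⟩ := h2
    have hm : G.mergeRel e0 y (G.src e.1) :=
      (G.quot_eq_iff e0).mp (hy.trans he1.symm)
    have hstep : ReflTransGen G.Adj x (G.src e.1) := by
      rcases hm with hm | ⟨hy', hs'⟩
      · rw [← hm]; exact hxy
      · have hsv : G.src e.1 = G.tgt e0 := by
          rcases hs' with h' | h'
          · exact absurd (G.eq_of_degOut_one hdeg h' rfl) e.2
          · exact h'
        rcases hy' with rfl | rfl
        · exact hxy.tail ⟨e0, rfl, hsv.symm⟩
        · rw [hsv]; exact hxy
    exact ⟨G.tgt e.1, he2, hstep.tail ⟨e.1, rfl, rfl⟩⟩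

lemma lift_backward (hne : G.src e0 ≠ G.tgt e0) (hdeg : G.degIn (G.tgt e0) = 1)
    {q q' : (G.contract e0).V} (h : ReflTransGen (G.contract e0).Adj q q') :
    ∀ y : G.V, Quot.mk (G.mergeRel e0) y = q' →
      ∃ x, Quot.mk (G.mergeRel e0) x = q ∧ ReflTransGen G.Adj x y := by
  induction h using ReflTransGen.head_induction_on with
  | refl => exact fun y hy => ⟨y, hy, .refl⟩
  | @head q m h1 h2 ih =>
    intro y hy
    obtain ⟨x1, hx1, hx1y⟩ := ih y hy
    obtain ⟨e, he1, he2⟩ := h1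
    have hm : G.mergeRel e0 (G.tgt e.1) x1 :=
      (G.quot_eq_iff e0).mp (he2.trans hx1.symm)
    have hstep : ReflTransGen G.Adj (G.tgt e.1) x1 := by
      rcases hm with hm | ⟨ht', hx'⟩
      · rw [hm]
      · have htu : G.tgt e.1 = G.src e0 := by
          rcases ht' with h' | h'
          · exact h'
          · exact absurd (G.eq_of_degIn_one hdeg h' rfl) e.2
        rcases hx' with rfl | rfl
        · rw [htu]
        · rw [htu]; exact ReflTransGen.single ⟨e0, rfl, rfl⟩
    exact ⟨G.src e.1, he1, (ReflTransGen.single ⟨e.1, rfl, rfl⟩).trans (hstep.trans hx1y)⟩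

end Aux2

end PGraph
namespace PGraph

section Aux3

variable (G : PGraph) (e0 : G.E)

lemma strong_of_contract_A (hs : G.Semistable)
    (hne : G.src e0 ≠ G.tgt e0) (hb : G.src e0 ≠ G.base) (hdeg : G.degOut (G.src e0) = 1)
    (h : (G.contract e0).Strong) : G.Strong := by
  have hIn : 2 ≤ G.degIn (G.src e0) := by
    have := hs _ hb
    omega
  obtain ⟨e1, he1⟩ := G.exists_tgt (G.src e0) (by omega)
  have hcu : G.src e1 ≠ G.src e0 := by
    intro h'
    exact hne (by rw [← he1, G.eq_of_degOut_one hdeg rfl h'])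
  have hvu : ReflTransGen G.Adj (G.tgt e0) (G.src e0) := by
    by_cases hcv : G.src e1 = G.tgt e0
    · exact ReflTransGen.single ⟨e1, hcv, he1⟩
    · obtain ⟨y, hy, hvy⟩ := G.lift_forward e0 hne hdeg
        (h (Quot.mk _ (G.tgt e0)) (Quot.mk _ (G.src e1))) (G.tgt e0) rfl
      have hyc : y = G.src e1 := by
        rcases (G.quot_eq_iff e0).mp hy with h' | ⟨_, hS⟩
        · exact h'
        · rcases hS with h' | h'
          · exact absurd h' hcu
          · exact absurd h' hcv
      exact (hyc ▸ hvy).tail ⟨e1, rfl, he1⟩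
  intro a b
  obtain ⟨y, hy, hay⟩ := G.lift_forward e0 hne hdeg (h (Quot.mk _ a) (Quot.mk _ b)) a rfl
  rcases (G.quot_eq_iff e0).mp hy with h' | ⟨hyS, hbS⟩
  · exact h' ▸ hay
  · rcases hbS with hbu | hbv
    · rcases hyS with rfl | rfl
      · exact hbu ▸ hay
      · exact hbu ▸ (hay.trans hvu)
    · rcases hyS with rfl | rfl
      · exact hbv ▸ (hay.tail ⟨e0, rfl, rfl⟩)
      · exact hbv ▸ hay

lemma strong_of_contract_B (hs : G.Semistable)
    (hne : G.src e0 ≠ G.tgt e0) (hb : G.tgt e0 ≠ G.base) (hdeg : G.degIn (G.tgt e0) = 1)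
    (h : (G.contract e0).Strong) : G.Strong := by
  have hOut : 2 ≤ G.degOut (G.tgt e0) := by
    have := hs _ hb
    omega
  obtain ⟨e1, he1⟩ := G.exists_src (G.tgt e0) (by omega)
  have hcv : G.tgt e1 ≠ G.tgt e0 := by
    intro h'
    exact hne (by rw [← he1, G.eq_of_degIn_one hdeg h' rfl])
  have hvu : ReflTransGen G.Adj (G.tgt e0) (G.src e0) := by
    by_cases hcu : G.tgt e1 = G.src e0
    · exact ReflTransGen.single ⟨e1, he1, hcu⟩
    · obtain ⟨x, hx, hxu⟩ := G.lift_backward e0 hne hdeg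
        (h (Quot.mk _ (G.tgt e1)) (Quot.mk _ (G.src e0))) (G.src e0) rfl
      have hxc : x = G.tgt e1 := by
        rcases (G.quot_eq_iff e0).mp hx with h' | ⟨_, hS⟩
        · exact h'
        · rcases hS with h' | h'
          · exact absurd h' hcu
          · exact absurd h' hcv
      exact (ReflTransGen.single ⟨e1, he1, rfl⟩).trans (hxc ▸ hxu)
  intro a b
  obtain ⟨x, hx, hxb⟩ := G.lift_backward e0 hne hdeg (h (Quot.mk _ a) (Quot.mk _ b)) b rfl
  rcases (G.quot_eq_iff e0).mp hx with h' | ⟨hxS, haS⟩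
  · exact h' ▸ hxb
  · rcases haS with hau | hav
    · rcases hxS with rfl | rfl
      · exact hau ▸ hxb
      · exact hau ▸ ((ReflTransGen.single ⟨e0, rfl, rfl⟩).trans hxb)
    · rcases hxS with rfl | rfl
      · exact hav ▸ (hvu.trans hxb)
      · exact hav ▸ hxb

lemma strong_of_contract (hs : G.Semistable) (hc : G.Contractible e0)
    (h : (G.contract e0).Strong) : G.Strong := by
  obtain ⟨hne, ⟨hb, hdeg⟩ | ⟨hb, hdeg⟩⟩ := hc
  · exact G.strong_of_contract_A e0 hs hne hb hdeg h
  · exact G.strong_of_contract_B e0 hs hne hb hdeg h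

end Aux3

section IsoLemmas

variable {G H : PGraph}

def Iso.refl (G : PGraph) : Iso G G :=
  ⟨Equiv.refl _, Equiv.refl _, fun _ => rfl, fun _ => rfl, rfl⟩

def Iso.symm (i : Iso G H) : Iso H G where
  vEquiv := i.vEquiv.symm
  eEquiv := i.eEquiv.symm
  src_map e := by
    apply i.vEquiv.injective
    rw [Equiv.apply_symm_apply, ← i.src_map, Equiv.apply_symm_apply]
  tgt_map e := by
    apply i.vEquiv.injective
    rw [Equiv.apply_symm_apply, ← i.tgt_map, Equiv.apply_symm_apply]
  base_map := by
    rw [← i.base_map, Equiv.symm_apply_apply]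

lemma Iso.strong (i : Iso G H) (h : G.Strong) : H.Strong := by
  intro a b
  have := h (i.vEquiv.symm a) (i.vEquiv.symm b)
  have hmap : ∀ x y : G.V, G.Adj x y → H.Adj (i.vEquiv x) (i.vEquiv y) := by
    rintro x y ⟨e, h1, h2⟩
    exact ⟨i.eEquiv e, by rw [i.src_map, h1], by rw [i.tgt_map, h2]⟩
  have : ReflTransGen H.Adj (i.vEquiv (i.vEquiv.symm a)) (i.vEquiv (i.vEquiv.symm b)) :=
    Relation.ReflTransGen.lift i.vEquiv (fun x y h => hmap x y h) _ _ this
  rwa [Equiv.apply_symm_apply, Equiv.apply_symm_apply] at this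

lemma Iso.degOut_map (i : Iso G H) (x : G.V) : H.degOut (i.vEquiv x) = G.degOut x := by
  apply Nat.card_congr
  exact (i.eEquiv.subtypeEquiv fun e => by
    rw [i.src_map]
    exact ⟨fun h => h ▸ rfl, fun h => i.vEquiv.injective h⟩).symm

lemma Iso.degIn_map (i : Iso G H) (x : G.V) : H.degIn (i.vEquiv x) = G.degIn x := by
  apply Nat.card_congr
  exact (i.eEquiv.subtypeEquiv fun e => by
    rw [i.tgt_map]
    exact ⟨fun h => h ▸ rfl, fun h => i.vEquiv.injective h⟩).symm

lemma Iso.semistable (i : Iso G H) (h : G.Semistable) : H.Semistable := by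
  intro w hw
  have hx : i.vEquiv.symm w ≠ G.base := by
    intro h'
    exact hw (by rw [← i.base_map, ← h', Equiv.apply_symm_apply])
  have := h _ hx
  rwa [← i.degOut_map (i.vEquiv.symm w), ← i.degIn_map (i.vEquiv.symm w),
    Equiv.apply_symm_apply] at this

end IsoLemmas

end PGraph
namespace PGraph

lemma no_loop_out (G : PGraph) (e0 : G.E) (hsrc : G.src e0 ≠ G.base)
    (hdeg : G.degOut (G.src e0) = 1) (hstrong : G.Strong) : G.tgt e0 ≠ G.src e0 := by
  intro hloop
  have key : ∀ b, ReflTransGen G.Adj (G.src e0) b → b = G.src e0 := by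
    intro b h
    induction h with
    | refl => rfl
    | @tail c b h1 h2 ih =>
      obtain ⟨e, he1, he2⟩ := h2
      have he : e = e0 := G.eq_of_degOut_one hdeg (he1.trans ih) rfl
      rw [← he2, he]
      exact hloop
  exact hsrc (key G.base (hstrong _ _)).symm

lemma no_loop_in (G : PGraph) (e0 : G.E) (htgt : G.tgt e0 ≠ G.base)
    (hdeg : G.degIn (G.tgt e0) = 1) (hstrong : G.Strong) : G.src e0 ≠ G.tgt e0 := by
  intro hloop
  have key : ∀ x, ReflTransGen G.Adj x (G.tgt e0) → x = G.tgt e0 := by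
    intro x h
    have : ∀ b, ReflTransGen G.Adj x b → b = G.tgt e0 → x = G.tgt e0 := by
      intro b h
      induction h with
      | refl => exact fun h => h
      | @tail c b h1 h2 ih =>
        intro hb
        obtain ⟨e, he1, he2⟩ := h2
        have he : e = e0 := G.eq_of_degIn_one hdeg (he2.trans hb) rfl
        apply ih
        rw [← he1, he]
        exact hloop
    exact this _ h rfl
  exact htgt (key G.base (hstrong _ _)).symm

lemma stabilizable_of_strong : ∀ n (Γ : PGraph), Nat.card Γ.V ≤ n →
    Γ.Semistable → Γ.Strong → Γ.Stabilizable := by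
  intro n
  induction n with
  | zero =>
    intro Γ hcard _ _
    have : Nonempty Γ.V := ⟨Γ.base⟩
    have := Nat.card_pos (α := Γ.V)
    omega
  | succ n ih =>
    intro Γ hcard hs hstrong
    by_cases hst : Γ.Stable
    · exact ⟨Γ, .refl, hst⟩
    · unfold Stable at hst
      push_neg at hst
      obtain ⟨v, hvb, hv⟩ := hst
      have hsv := hs v hvb
      have hone : Γ.degOut v = 1 ∨ Γ.degIn v = 1 := by omega
      have key : ∀ e0 : Γ.E, Γ.Contractible e0 → Γ.Stabilizable := by
        intro e0 hc
        have hne : Γ.src e0 ≠ Γ.tgt e0 := hc.1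
        obtain ⟨Hf, chain, hstable⟩ := ih (Γ.contract e0)
          (by have := Γ.card_contract_lt e0 hne; omega)
          (Γ.contract_semistable e0 hs hc)
          (Γ.contract_strong e0 hstrong)
        exact ⟨Hf, ReflTransGen.head ⟨e0, hc, ⟨Iso.refl _⟩⟩ chain, hstable⟩
      rcases hone with hone | hone
      · obtain ⟨e0, he0⟩ := Γ.exists_src v (by omega)
        refine key e0 ⟨?_, Or.inl ⟨he0 ▸ hvb, he0 ▸ hone⟩⟩
        exact fun h => (Γ.no_loop_out e0 (he0 ▸ hvb) (he0 ▸ hone) hstrong) h.symm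
      · obtain ⟨e0, he0⟩ := Γ.exists_tgt v (by omega)
        refine key e0 ⟨?_, Or.inr ⟨he0 ▸ hvb, he0 ▸ hone⟩⟩
        exact Γ.no_loop_in e0 (he0 ▸ hvb) (he0 ▸ hone) hstrong

lemma strong_of_stabilization : ∀ Γ H : PGraph,
    ReflTransGen ContractStep Γ H → Γ.Semistable → H.Strong → Γ.Strong := by
  intro Γ H hchain
  induction hchain using ReflTransGen.head_induction_on with
  | refl => exact fun _ h => h
  | @head a c h1 h2 ih =>
    intro hsa hH
    obtain ⟨e0, hc, ⟨iso⟩⟩ := h1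
    have hsc : (a.contract e0).Semistable := a.contract_semistable e0 hsa hc
    have hcs : c.Strong := ih (iso.semistable hsc) hH
    exact a.strong_of_contract e0 hsa hc (iso.symm.strong hcs)

end PGraph

/-- Every strongly connected semistable pointed graph is stabilizable, and
a stabilizable semistable pointed graph whose stabilization graph is strongly connected
is itself strongly connected. -/
theorem pointed_strong_stabilizable :
    (∀ Γ : PGraph, Γ.Semistable → Γ.Strong → Γ.Stabilizable) ∧
    (∀ Γ H : PGraph, Γ.Semistable → Γ.IsStabilization H → H.Strong → Γ.Strong) := by
  constructor
  · intro Γ hs hstrong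
    exact PGraph.stabilizable_of_strong (Nat.card Γ.V) Γ le_rfl hs hstrong
  · intro Γ H hs hstab hH
    exact PGraph.strong_of_stabilization Γ H hstab.1 hs hH
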